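/- Let x : Fin 11 → ℝ^10 be a regular 11-simplex, let C1 = {x 0, …, x 10}, and let D and D' be two cliques of order 10 in the graph on Y1. Then there exists a bijection f from C1 ∪ D onto C1 ∪ D' preserving all inner products (⟨f u, f v⟩ = ⟨u, v⟩ for all u, v ∈ C1 ∪ D); equivalently, the Gram matrices of C1 ∪ D and C1 ∪ D' are permutationally equivalent. -/
import Mathlib


open RealInnerProductSpace

noncomputable section

/-- The three admissible inner product values (angles). -/
def α1 : ℝ := 4/15
def α2 : ℝ := -1/10
def α3 : ℝ := -7/15

/-- A regular 11-simplex in ℝ^10: eleven unit vectors with pairwise inner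
products equal to -1/10. -/
def IsRegularSimplex (x : Fin 11 → EuclideanSpace ℝ (Fin 10)) : Prop :=
  (∀ i, ‖x i‖ = 1) ∧ ∀ i j : Fin 11, i ≠ j → ⟪x i, x j⟫ = -1/10

/-- The set `Y1`: unit vectors `y` with `⟪x 0, y⟫ = α2` such that among the
indices `i ≠ 0`, exactly six satisfy `⟪x i, y⟫ = α1`, exactly one satisfies
`⟪x i, y⟫ = α2`, and exactly three satisfy `⟪x i, y⟫ = α3`. -/
def Y1set (x : Fin 11 → EuclideanSpace ℝ (Fin 10)) : Set (EuclideanSpace ℝ (Fin 10)) :=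
  {y | ‖y‖ = 1 ∧ ⟪x 0, y⟫ = α2 ∧
    {i : Fin 11 | i ≠ 0 ∧ ⟪x i, y⟫ = α1}.ncard = 6 ∧
    {i : Fin 11 | i ≠ 0 ∧ ⟪x i, y⟫ = α2}.ncard = 1 ∧
    {i : Fin 11 | i ≠ 0 ∧ ⟪x i, y⟫ = α3}.ncard = 3}

/-- A clique of order 10 in the graph on `Y1` in which two distinct vectors are
adjacent iff their inner product equals `α2`. -/
def IsClique10 (x : Fin 11 → EuclideanSpace ℝ (Fin 10))
    (D : Set (EuclideanSpace ℝ (Fin 10))) : Prop :=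
  D ⊆ Y1set x ∧ D.ncard = 10 ∧
    ∀ y ∈ D, ∀ y' ∈ D, y ≠ y' → ⟪y, y'⟫ = α2

open Finset

section helpers

open scoped Classical

variable {x : Fin 11 → EuclideanSpace ℝ (Fin 10)}

/-- ncard over nonzero indices equals a Fin-10 filter card. -/
lemma ncard_shift (Q : Fin 11 → Prop) :
    {i : Fin 11 | i ≠ 0 ∧ Q i}.ncard = (univ.filter fun j : Fin 10 => Q j.succ).card := by
  have himg : {i : Fin 11 | i ≠ 0 ∧ Q i} = Fin.succ '' {j : Fin 10 | Q j.succ} := by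
    ext i
    simp only [Set.mem_setOf_eq, Set.mem_image]
    constructor
    · rintro ⟨hi0, hQ⟩
      obtain ⟨j, rfl⟩ := Fin.exists_succ_eq.mpr hi0
      exact ⟨j, hQ, rfl⟩
    · rintro ⟨j, hQ, rfl⟩
      exact ⟨Fin.succ_ne_zero j, hQ⟩
  rw [himg, Set.ncard_image_of_injective _ (Fin.succ_injective 10)]
  rw [← Set.ncard_coe_finset]
  congr 1
  ext j; simp

/-- the classes of a `Y1` element. -/
def fS (x : Fin 11 → EuclideanSpace ℝ (Fin 10)) (y : EuclideanSpace ℝ (Fin 10)) :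
    Finset (Fin 10) := univ.filter fun j => ⟪x j.succ, y⟫ = α1
def fP (x : Fin 11 → EuclideanSpace ℝ (Fin 10)) (y : EuclideanSpace ℝ (Fin 10)) :
    Finset (Fin 10) := univ.filter fun j => ⟪x j.succ, y⟫ = α2
def fT (x : Fin 11 → EuclideanSpace ℝ (Fin 10)) (y : EuclideanSpace ℝ (Fin 10)) :
    Finset (Fin 10) := univ.filter fun j => ⟪x j.succ, y⟫ = α3

lemma fS_card {y} (hy : y ∈ Y1set x) : (fS x y).card = 6 := by
  have := hy.2.2.1; rwa [ncard_shift] at this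
lemma fP_card {y} (hy : y ∈ Y1set x) : (fP x y).card = 1 := by
  have := hy.2.2.2.1; rwa [ncard_shift] at this
lemma fT_card {y} (hy : y ∈ Y1set x) : (fT x y).card = 3 := by
  have := hy.2.2.2.2; rwa [ncard_shift] at this

lemma fS_disj_fP {y : EuclideanSpace ℝ (Fin 10)} : Disjoint (fS x y) (fP x y) := by
  rw [Finset.disjoint_left]
  intro j hj hj'
  simp only [fS, fP, mem_filter] at hj hj'
  have : α1 = α2 := hj.2 ▸ hj'.2
  norm_num [α1, α2] at this
lemma fS_disj_fT {y : EuclideanSpace ℝ (Fin 10)} : Disjoint (fS x y) (fT x y) := by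
  rw [Finset.disjoint_left]
  intro j hj hj'
  simp only [fS, fT, mem_filter] at hj hj'
  have : α1 = α3 := hj.2 ▸ hj'.2
  norm_num [α1, α3] at this
lemma fP_disj_fT {y : EuclideanSpace ℝ (Fin 10)} : Disjoint (fP x y) (fT x y) := by
  rw [Finset.disjoint_left]
  intro j hj hj'
  simp only [fP, fT, mem_filter] at hj hj'
  have : α2 = α3 := hj.2 ▸ hj'.2
  norm_num [α2, α3] at this

lemma f_partition {y} (hy : y ∈ Y1set x) : fS x y ∪ fP x y ∪ fT x y = univ := by
  apply Finset.eq_univ_of_card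
  rw [card_union_of_disjoint, card_union_of_disjoint fS_disj_fP,
    fS_card hy, fP_card hy, fT_card hy]
  · simp
  · exact Finset.disjoint_union_left.mpr ⟨fS_disj_fT, fP_disj_fT⟩

lemma f_cover {y} (hy : y ∈ Y1set x) (j : Fin 10) :
    j ∈ fS x y ∨ j ∈ fP x y ∨ j ∈ fT x y := by
  have : j ∈ fS x y ∪ fP x y ∪ fT x y := (f_partition hy) ▸ mem_univ j
  simp only [Finset.mem_union] at this
  tauto

end helpers
section sums

open scoped Classical

variable {x : Fin 11 → EuclideanSpace ℝ (Fin 10)}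

lemma simplex_sum_zero (hx : IsRegularSimplex x) : ∑ i, x i = 0 := by
  have h : ⟪∑ i, x i, ∑ i, x i⟫ = 0 := by
    rw [sum_inner]
    have : ∀ i : Fin 11, ⟪x i, ∑ j, x j⟫ = 0 := by
      intro i
      rw [inner_sum]
      rw [← Finset.add_sum_erase _ _ (mem_univ i)]
      have h1 : ⟪x i, x i⟫ = 1 := by
        rw [real_inner_self_eq_norm_sq, hx.1 i]; norm_num
      have h2 : ∀ j ∈ univ.erase i, ⟪x i, x j⟫ = -1/10 := by
        intro j hj
        exact hx.2 i j (Ne.symm (Finset.ne_of_mem_erase hj))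
      rw [h1, Finset.sum_congr rfl h2, Finset.sum_const, Finset.card_erase_of_mem (mem_univ i)]
      simp
      norm_num
    rw [Finset.sum_congr rfl (fun i _ => this i), Finset.sum_const]
    simp
  exact inner_self_eq_zero.mp h

lemma sum_w_zero (hx : IsRegularSimplex x) (y : EuclideanSpace ℝ (Fin 10)) :
    ∑ i, ⟪x i, y⟫ = 0 := by
  rw [← sum_inner, simplex_sum_zero hx, inner_zero_left]

lemma sum_sq_w {y} (hy : y ∈ Y1set x) :
    ∑ i : Fin 11, ⟪x i, y⟫ * ⟪x i, y⟫ = 11/10 := by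
  rw [Fin.sum_univ_succ]
  have h0 : ⟪x 0, y⟫ = α2 := hy.2.1
  have hsplit : ∑ j : Fin 10, ⟪x j.succ, y⟫ * ⟪x j.succ, y⟫
      = ∑ j ∈ (fS x y ∪ fP x y ∪ fT x y), ⟪x j.succ, y⟫ * ⟪x j.succ, y⟫ := by
    rw [f_partition hy]
  rw [h0, hsplit, Finset.sum_union (Finset.disjoint_union_left.mpr ⟨fS_disj_fT, fP_disj_fT⟩),
    Finset.sum_union fS_disj_fP]
  have hS : ∑ j ∈ fS x y, ⟪x j.succ, y⟫ * ⟪x j.succ, y⟫ = 6 * (α1 * α1) := by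
    rw [Finset.sum_congr rfl (fun j hj => by
      simp only [fS, mem_filter] at hj; rw [hj.2]), Finset.sum_const, fS_card hy]
    simp
  have hP : ∑ j ∈ fP x y, ⟪x j.succ, y⟫ * ⟪x j.succ, y⟫ = 1 * (α2 * α2) := by
    rw [Finset.sum_congr rfl (fun j hj => by
      simp only [fP, mem_filter] at hj; rw [hj.2]), Finset.sum_const, fP_card hy]
    simp
  have hT : ∑ j ∈ fT x y, ⟪x j.succ, y⟫ * ⟪x j.succ, y⟫ = 3 * (α3 * α3) := by
    rw [Finset.sum_congr rfl (fun j hj => by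
      simp only [fT, mem_filter] at hj; rw [hj.2]), Finset.sum_const, fT_card hy]
    simp
  rw [hS, hP, hT]
  norm_num [α1, α2, α3]

lemma y_rep (hx : IsRegularSimplex x) {y} (hy : y ∈ Y1set x) :
    y = (10/11 : ℝ) • ∑ i, ⟪x i, y⟫ • x i := by
  set v : EuclideanSpace ℝ (Fin 10) := ∑ i, ⟪x i, y⟫ • x i with hv
  have hxv : ∀ i, ⟪x i, v⟫ = (11/10) * ⟪x i, y⟫ := by
    intro i
    rw [hv, inner_sum]
    simp_rw [real_inner_smul_right]
    rw [← Finset.add_sum_erase _ _ (mem_univ i)]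
    have h1 : ⟪x i, x i⟫ = 1 := by
      rw [real_inner_self_eq_norm_sq, hx.1 i]; norm_num
    have h2 : ∀ j ∈ univ.erase i, ⟪x j, y⟫ * ⟪x i, x j⟫ = ⟪x j, y⟫ * (-1/10) := by
      intro j hj
      rw [hx.2 i j (Ne.symm (Finset.ne_of_mem_erase hj))]
    rw [h1, Finset.sum_congr rfl h2, ← Finset.sum_mul,
      Finset.sum_erase_eq_sub (mem_univ i), sum_w_zero hx]
    ring
  have hyv : ⟪y, v⟫ = 11/10 := by
    rw [hv, inner_sum]
    simp_rw [real_inner_smul_right]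
    have : ∀ i ∈ univ, ⟪x i, y⟫ * ⟪y, x i⟫ = ⟪x i, y⟫ * ⟪x i, y⟫ := by
      intro i _; rw [real_inner_comm y (x i)]
    rw [Finset.sum_congr rfl this, sum_sq_w hy]
  have hvv : ⟪v, v⟫ = (11/10) * (11/10) := by
    conv_lhs => rw [hv, sum_inner]
    simp_rw [real_inner_smul_left]
    have : ∀ i ∈ univ, ⟪x i, y⟫ * ⟪x i, v⟫ = (11/10) * (⟪x i, y⟫ * ⟪x i, y⟫) := by
      intro i _; rw [hxv i]; ring
    rw [Finset.sum_congr rfl this, ← Finset.mul_sum, sum_sq_w hy]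
  have hyy : ⟪y, y⟫ = 1 := by
    rw [real_inner_self_eq_norm_sq, hy.1]; norm_num
  have hz : ⟪y - (10/11 : ℝ) • v, y - (10/11 : ℝ) • v⟫ = 0 := by
    rw [inner_sub_sub_self]
    rw [real_inner_smul_right, real_inner_smul_left, real_inner_smul_left,
      real_inner_smul_right, hyy, hyv, hvv]
    have hvy : ⟪v, y⟫ = 11/10 := by rw [real_inner_comm]; exact hyv
    rw [hvy]; ring
  have := inner_self_eq_zero.mp hz
  rw [sub_eq_zero] at this
  exact this

lemma inner_Y1 (hx : IsRegularSimplex x) {y y'} (hy : y ∈ Y1set x) (hy' : y' ∈ Y1set x) :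
    ⟪y, y'⟫ = (10/11) * ∑ i : Fin 11, ⟪x i, y⟫ * ⟪x i, y'⟫ := by
  conv_lhs => rw [y_rep hx hy]
  rw [real_inner_smul_left, sum_inner]
  congr 1
  refine Finset.sum_congr rfl fun i _ => ?_
  rw [real_inner_smul_left]

end sums
section pair

open scoped Classical

variable {x : Fin 11 → EuclideanSpace ℝ (Fin 10)}

lemma pair_structure (hx : IsRegularSimplex x) {y y'}
    (hy : y ∈ Y1set x) (hy' : y' ∈ Y1set x) (hip : ⟪y, y'⟫ = α2) :
    (fP x y ∩ fP x y' = ∅) ∧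
    (((fT x y ∩ fT x y').card = 1 ∧ fP x y ∩ fT x y' = ∅ ∧ fT x y ∩ fP x y' = ∅)
     ∨ (fT x y ∩ fT x y' = ∅ ∧ (fP x y ∩ fT x y').card = 1 ∧ (fT x y ∩ fP x y').card = 1)) := by
  have hsum : ∑ i : Fin 11, ⟪x i, y⟫ * ⟪x i, y'⟫ = -11/100 := by
    have h := inner_Y1 hx hy hy'
    rw [hip] at h
    have : α2 = -1/10 := rfl
    linarith [h]
  have hsum10 : ∑ j : Fin 10, ⟪x j.succ, y⟫ * ⟪x j.succ, y'⟫ = -3/25 := by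
    rw [Fin.sum_univ_succ, hy.2.1] at hsum
    have h0' : ⟪x 0, y'⟫ = α2 := hy'.2.1
    rw [h0'] at hsum
    have : α2 * α2 = 1/100 := by norm_num [α2]
    linarith [hsum]
  -- decompose any row set by the partition of y'
  have hdecomp : ∀ X : Finset (Fin 10),
      X = (X ∩ fS x y') ∪ (X ∩ fP x y') ∪ (X ∩ fT x y') := by
    intro X
    rw [← Finset.inter_union_distrib_left, ← Finset.inter_union_distrib_left,
      f_partition hy', Finset.inter_univ]
  have hdecomp' : ∀ X : Finset (Fin 10),
      X = (fS x y ∩ X) ∪ (fP x y ∩ X) ∪ (fT x y ∩ X) := by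
    intro X
    rw [← Finset.union_inter_distrib_right, ← Finset.union_inter_distrib_right,
      f_partition hy, Finset.univ_inter]
  have hd1 : ∀ X : Finset (Fin 10), Disjoint (X ∩ fS x y') (X ∩ fP x y') :=
    fun X => Finset.disjoint_of_subset_left Finset.inter_subset_right
      (Finset.disjoint_of_subset_right Finset.inter_subset_right fS_disj_fP)
  have hd2 : ∀ X : Finset (Fin 10), Disjoint ((X ∩ fS x y') ∪ (X ∩ fP x y')) (X ∩ fT x y') := by
    intro X
    refine Finset.disjoint_union_left.mpr ⟨?_, ?_⟩
    · exact Finset.disjoint_of_subset_left Finset.inter_subset_right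
        (Finset.disjoint_of_subset_right Finset.inter_subset_right fS_disj_fT)
    · exact Finset.disjoint_of_subset_left Finset.inter_subset_right
        (Finset.disjoint_of_subset_right Finset.inter_subset_right fP_disj_fT)
  have hd1' : ∀ X : Finset (Fin 10), Disjoint (fS x y ∩ X) (fP x y ∩ X) :=
    fun X => Finset.disjoint_of_subset_left Finset.inter_subset_left
      (Finset.disjoint_of_subset_right Finset.inter_subset_left fS_disj_fP)
  have hd2' : ∀ X : Finset (Fin 10), Disjoint ((fS x y ∩ X) ∪ (fP x y ∩ X)) (fT x y ∩ X) := by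
    intro X
    refine Finset.disjoint_union_left.mpr ⟨?_, ?_⟩
    · exact Finset.disjoint_of_subset_left Finset.inter_subset_left
        (Finset.disjoint_of_subset_right Finset.inter_subset_left fS_disj_fT)
    · exact Finset.disjoint_of_subset_left Finset.inter_subset_left
        (Finset.disjoint_of_subset_right Finset.inter_subset_left fP_disj_fT)
  -- row marginals
  have hrow : ∀ X : Finset (Fin 10),
      (X ∩ fS x y').card + (X ∩ fP x y').card + (X ∩ fT x y').card = X.card := by
    intro X
    conv_rhs => rw [hdecomp X]
    rw [card_union_of_disjoint (hd2 X), card_union_of_disjoint (hd1 X)]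
  have hcol : ∀ X : Finset (Fin 10),
      (fS x y ∩ X).card + (fP x y ∩ X).card + (fT x y ∩ X).card = X.card := by
    intro X
    conv_rhs => rw [hdecomp' X]
    rw [card_union_of_disjoint (hd2' X), card_union_of_disjoint (hd1' X)]
  -- the 9 cell counts
  set n11 := (fS x y ∩ fS x y').card
  set n12 := (fS x y ∩ fP x y').card
  set n13 := (fS x y ∩ fT x y').card
  set n21 := (fP x y ∩ fS x y').card
  set n22 := (fP x y ∩ fP x y').card
  set n23 := (fP x y ∩ fT x y').card
  set n31 := (fT x y ∩ fS x y').card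
  set n32 := (fT x y ∩ fP x y').card
  set n33 := (fT x y ∩ fT x y').card
  -- the sum over each cell
  have hcell : ∀ (X X' : Finset (Fin 10)) (u v : ℝ),
      (∀ j ∈ X, ⟪x j.succ, y⟫ = u) → (∀ j ∈ X', ⟪x j.succ, y'⟫ = v) →
      ∑ j ∈ X ∩ X', ⟪x j.succ, y⟫ * ⟪x j.succ, y'⟫ = (X ∩ X').card * (u * v) := by
    intro X X' u v hX hX'
    rw [Finset.sum_congr rfl (fun j hj => by
      rw [hX j (Finset.mem_of_mem_inter_left hj), hX' j (Finset.mem_of_mem_inter_right hj)]),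
      Finset.sum_const]
    simp [mul_comm]
  have memS : ∀ j ∈ fS x y, ⟪x j.succ, y⟫ = α1 := fun j hj => (mem_filter.mp hj).2
  have memP : ∀ j ∈ fP x y, ⟪x j.succ, y⟫ = α2 := fun j hj => (mem_filter.mp hj).2
  have memT : ∀ j ∈ fT x y, ⟪x j.succ, y⟫ = α3 := fun j hj => (mem_filter.mp hj).2
  have memS' : ∀ j ∈ fS x y', ⟪x j.succ, y'⟫ = α1 := fun j hj => (mem_filter.mp hj).2
  have memP' : ∀ j ∈ fP x y', ⟪x j.succ, y'⟫ = α2 := fun j hj => (mem_filter.mp hj).2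
  have memT' : ∀ j ∈ fT x y', ⟪x j.succ, y'⟫ = α3 := fun j hj => (mem_filter.mp hj).2
  have hbig : (n11:ℝ) * (α1*α1) + n12 * (α1*α2) + n13 * (α1*α3)
      + (n21 * (α2*α1) + n22 * (α2*α2) + n23 * (α2*α3))
      + (n31 * (α3*α1) + n32 * (α3*α2) + n33 * (α3*α3)) = -3/25 := by
    rw [← hcell _ _ _ _ memS memS', ← hcell _ _ _ _ memS memP', ← hcell _ _ _ _ memS memT',
      ← hcell _ _ _ _ memP memS', ← hcell _ _ _ _ memP memP', ← hcell _ _ _ _ memP memT',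
      ← hcell _ _ _ _ memT memS', ← hcell _ _ _ _ memT memP', ← hcell _ _ _ _ memT memT']
    rw [← Finset.sum_union (hd1 (fS x y)), ← Finset.sum_union (hd2 (fS x y)),
      ← Finset.sum_union (hd1 (fP x y)), ← Finset.sum_union (hd2 (fP x y)),
      ← Finset.sum_union (hd1 (fT x y)), ← Finset.sum_union (hd2 (fT x y))]
    rw [← hdecomp (fS x y), ← hdecomp (fP x y), ← hdecomp (fT x y)]
    rw [← Finset.sum_union fS_disj_fP, ← Finset.sum_union
      (Finset.disjoint_union_left.mpr ⟨fS_disj_fT, fP_disj_fT⟩), f_partition hy]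
    exact hsum10
  -- integer arithmetic
  have hr1 : n11 + n12 + n13 = 6 := by rw [← fS_card hy]; exact hrow (fS x y)
  have hr2 : n21 + n22 + n23 = 1 := by rw [← fP_card hy]; exact hrow (fP x y)
  have hr3 : n31 + n32 + n33 = 3 := by rw [← fT_card hy]; exact hrow (fT x y)
  have hc1 : n11 + n21 + n31 = 6 := by rw [← fS_card hy']; exact hcol (fS x y')
  have hc2 : n12 + n22 + n32 = 1 := by rw [← fP_card hy']; exact hcol (fP x y')
  have hc3 : n13 + n23 + n33 = 3 := by rw [← fT_card hy']; exact hcol (fT x y')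
  have hreal : (64:ℝ)*n11 + 9*n22 + 42*n23 + 42*n32 + 196*n33 + 108
      = 24*n12 + 112*n13 + 24*n21 + 112*n31 := by
    have e11 : α1*α1 = 64/900 := by norm_num [α1]
    have e12 : α1*α2 = -24/900 := by norm_num [α1, α2]
    have e13 : α1*α3 = -112/900 := by norm_num [α1, α3]
    have e22 : α2*α2 = 9/900 := by norm_num [α2]
    have e23 : α2*α3 = 42/900 := by norm_num [α2, α3]
    have e33 : α3*α3 = 196/900 := by norm_num [α3]
    have e21 : α2*α1 = -24/900 := by norm_num [α1, α2]
    have e31 : α3*α1 = -112/900 := by norm_num [α1, α3]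
    have e32 : α3*α2 = 42/900 := by norm_num [α2, α3]
    rw [e11, e12, e13, e21, e22, e23, e31, e32, e33] at hbig
    linarith [hbig]
  have hnat : 64*n11 + 9*n22 + 42*n23 + 42*n32 + 196*n33 + 108
      = 24*n12 + 112*n13 + 24*n21 + 112*n31 := by exact_mod_cast hreal
  have hconc : n22 = 0 ∧ ((n33 = 1 ∧ n23 = 0 ∧ n32 = 0) ∨ (n33 = 0 ∧ n23 = 1 ∧ n32 = 1)) := by
    omega
  refine ⟨Finset.card_eq_zero.mp hconc.1, ?_⟩
  rcases hconc.2 with ⟨h1, h2, h3⟩ | ⟨h1, h2, h3⟩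
  · exact Or.inl ⟨h1, Finset.card_eq_zero.mp h2, Finset.card_eq_zero.mp h3⟩
  · exact Or.inr ⟨Finset.card_eq_zero.mp h1, h2, h3⟩

end pair
section clique

open scoped Classical

variable {x : Fin 11 → EuclideanSpace ℝ (Fin 10)}

lemma clique_structure (hx : IsRegularSimplex x) {D : Set (EuclideanSpace ℝ (Fin 10))}
    (hD : IsClique10 x D) :
    ∃ (yd : Fin 10 → EuclideanSpace ℝ (Fin 10)) (A : Fin 10 → Fin 10 → Prop),
      (∀ j, yd j ∈ D) ∧ Function.Injective yd ∧ (∀ z ∈ D, ∃ j, yd j = z) ∧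
      (∀ j, ‖yd j‖ = 1) ∧
      (∀ j k, j ≠ k → ⟪yd j, yd k⟫ = α2) ∧
      (∀ j, ⟪x 0, yd j⟫ = α2) ∧
      (∀ l j, ⟪x l.succ, yd j⟫ = if l = j then α2 else if A l j then α3 else α1) ∧
      (∀ j k, A j k → A k j) ∧ (∀ j, ¬ A j j) ∧
      (∀ k, {j | A j k}.ncard = 3) ∧
      (∀ j k l, A j k → A l j → A l k → False) ∧
      (∀ j k, j ≠ k → ¬ A j k → ∃! l, A l j ∧ A l k) := by
  obtain ⟨hDY, hDcard, hDcl⟩ := hD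
  -- the pivot map
  set pf : EuclideanSpace ℝ (Fin 10) → Fin 10 :=
    fun y => if h : (fP x y).Nonempty then h.choose else 0 with hpf
  have hpmem : ∀ y ∈ D, fP x y = {pf y} := by
    intro y hy
    obtain ⟨p, hp⟩ := Finset.card_eq_one.mp (fP_card (hDY hy))
    have hne : (fP x y).Nonempty := by rw [hp]; exact Finset.singleton_nonempty p
    have hmem : pf y ∈ fP x y := by
      rw [hpf]; simp only [dif_pos hne]; exact hne.choose_spec
    rw [hp] at hmem ⊢
    rw [Finset.mem_singleton] at hmem
    rw [hmem]
  have hpD : Set.InjOn pf D := by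
    intro y hy y' hy' he
    by_contra hne
    have h := (pair_structure hx (hDY hy) (hDY hy') (hDcl y hy y' hy' hne)).1
    have hmem : pf y ∈ fP x y ∩ fP x y' := by
      rw [Finset.mem_inter]
      refine ⟨?_, ?_⟩
      · rw [hpmem y hy]; exact Finset.mem_singleton_self _
      · rw [hpmem y' hy', he]; exact Finset.mem_singleton_self _
    rw [h] at hmem
    exact absurd hmem (Finset.notMem_empty _)
  have himg : pf '' D = Set.univ := by
    apply Set.eq_of_subset_of_ncard_le (Set.subset_univ _)
    rw [Set.ncard_image_of_injOn hpD, hDcard, Set.ncard_univ]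
    simp
  have hsurj : ∀ j : Fin 10, ∃ y, y ∈ D ∧ pf y = j := by
    intro j
    have : j ∈ pf '' D := by rw [himg]; trivial
    obtain ⟨y, hy, hyj⟩ := this
    exact ⟨y, hy, hyj⟩
  choose ydf hydD hydp using hsurj
  have hPj : ∀ j, fP x (ydf j) = {j} := by
    intro j; rw [hpmem _ (hydD j), hydp j]
  have hyne : ∀ j k, j ≠ k → ydf j ≠ ydf k := by
    intro j k h he
    exact h (by rw [← hydp j, ← hydp k, he])
  set A : Fin 10 → Fin 10 → Prop := fun j k => j ∈ fT x (ydf k) with hA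
  have hcase : ∀ j k, j ≠ k →
      ((fT x (ydf j) ∩ fT x (ydf k)).card = 1 ∧ ¬ A k j ∧ ¬ A j k)
      ∨ (fT x (ydf j) ∩ fT x (ydf k) = ∅ ∧ A k j ∧ A j k) := by
    intro j k hjk
    obtain ⟨h0, hdich⟩ := pair_structure hx (hDY (hydD j)) (hDY (hydD k))
      (hDcl _ (hydD j) _ (hydD k) (hyne j k hjk))
    rcases hdich with ⟨h1, h2, h3⟩ | ⟨h1, h2, h3⟩
    · left
      refine ⟨h1, ?_, ?_⟩
      · intro hk
        have : k ∈ fT x (ydf j) ∩ fP x (ydf k) :=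
          Finset.mem_inter.mpr ⟨hk, by rw [hPj k]; exact Finset.mem_singleton_self _⟩
        rw [h3] at this
        exact absurd this (Finset.notMem_empty _)
      · intro hj
        have : j ∈ fP x (ydf j) ∩ fT x (ydf k) :=
          Finset.mem_inter.mpr ⟨by rw [hPj j]; exact Finset.mem_singleton_self _, hj⟩
        rw [h2] at this
        exact absurd this (Finset.notMem_empty _)
    · right
      refine ⟨h1, ?_, ?_⟩
      · obtain ⟨m, hm⟩ := Finset.card_eq_one.mp h3
        have hmm : m ∈ fT x (ydf j) ∩ fP x (ydf k) := by
          rw [hm]; exact Finset.mem_singleton_self _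
        rw [Finset.mem_inter, hPj k, Finset.mem_singleton] at hmm
        exact hmm.2 ▸ hmm.1
      · obtain ⟨m, hm⟩ := Finset.card_eq_one.mp h2
        have hmm : m ∈ fP x (ydf j) ∩ fT x (ydf k) := by
          rw [hm]; exact Finset.mem_singleton_self _
        rw [Finset.mem_inter, hPj j, Finset.mem_singleton] at hmm
        exact hmm.1 ▸ hmm.2
  have hirr : ∀ j, ¬ A j j := by
    intro j hj
    have : j ∈ fP x (ydf j) := by rw [hPj j]; exact Finset.mem_singleton_self _
    exact (Finset.disjoint_left.mp fP_disj_fT) this hj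
  refine ⟨ydf, A, fun j => hydD j, ?_, ?_, ?_, ?_, ?_, ?_, ?_, hirr, ?_, ?_, ?_⟩
  · -- injective
    intro j k h
    by_contra hne
    exact hyne j k hne h
  · -- surjective onto D
    intro z hz
    refine ⟨pf z, ?_⟩
    exact hpD (hydD (pf z)) hz (hydp (pf z))
  · exact fun j => (hDY (hydD j)).1
  · exact fun j k hjk => hDcl _ (hydD j) _ (hydD k) (hyne j k hjk)
  · exact fun j => (hDY (hydD j)).2.1
  · -- trichotomy
    intro l j
    by_cases hlj : l = j
    · rw [if_pos hlj]
      have : l ∈ fP x (ydf j) := by rw [hPj j, hlj]; exact Finset.mem_singleton_self _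
      exact (mem_filter.mp this).2
    · rw [if_neg hlj]
      by_cases hAlj : A l j
      · rw [if_pos hAlj]
        exact (mem_filter.mp hAlj).2
      · rw [if_neg hAlj]
        have hnP : l ∉ fP x (ydf j) := by
          rw [hPj j, Finset.mem_singleton]; exact hlj
        rcases f_cover (hDY (hydD j)) l with h | h | h
        · exact (mem_filter.mp h).2
        · exact absurd h hnP
        · exact absurd h hAlj
  · -- symmetry
    intro j k hjk
    by_cases h : j = k
    · exact h ▸ hjk
    · rcases hcase j k h with ⟨_, _, h3⟩ | ⟨_, h2, _⟩
      · exact absurd hjk h3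
      · exact h2
  · -- degree
    intro k
    have : {j | A j k} = ↑(fT x (ydf k)) := by ext j; simp [hA]
    rw [this, Set.ncard_coe_finset]
    exact fT_card (hDY (hydD k))
  · -- lambda = 0
    intro j k l hjk hlj hlk
    by_cases h : j = k
    · exact hirr k (h ▸ hjk)
    · rcases hcase j k h with ⟨_, _, h3⟩ | ⟨h1, _, _⟩
      · exact absurd hjk h3
      · have : l ∈ fT x (ydf j) ∩ fT x (ydf k) := Finset.mem_inter.mpr ⟨hlj, hlk⟩
        rw [h1] at this
        exact absurd this (Finset.notMem_empty _)
  · -- mu = 1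
    intro j k hjk hnA
    rcases hcase j k hjk with ⟨h1, _, _⟩ | ⟨_, _, h3⟩
    · obtain ⟨m, hm⟩ := Finset.card_eq_one.mp h1
      have hmm : m ∈ fT x (ydf j) ∩ fT x (ydf k) := by
        rw [hm]; exact Finset.mem_singleton_self _
      rw [Finset.mem_inter] at hmm
      refine ⟨m, ⟨hmm.1, hmm.2⟩, ?_⟩
      intro l hl
      have : l ∈ fT x (ydf j) ∩ fT x (ydf k) := Finset.mem_inter.mpr ⟨hl.1, hl.2⟩
      rw [hm, Finset.mem_singleton] at this
      exact this
    · exact absurd h3 hnA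

end clique
-- PETERSEN PART INSERTED HERE (from pet.lean)

/-- helper: a 3-element set containing a distinguished element. -/
lemma three_with_mem {s : Set (Fin 10)} (h3 : s.ncard = 3) {u : Fin 10} (hu : u ∈ s) :
    ∃ p q, p ≠ q ∧ p ≠ u ∧ q ≠ u ∧ s = {u, p, q} := by
  obtain ⟨x, y, z, hxy, hxz, hyz, hs⟩ := Set.ncard_eq_three.mp h3
  subst hs
  simp only [Set.mem_insert_iff, Set.mem_singleton_iff] at hu
  rcases hu with hu | hu | hu
  · refine ⟨y, z, hyz, ?_, ?_, by rw [hu]⟩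
    · intro h; exact hxy (by rw [h, hu])
    · intro h; exact hxz (by rw [h, hu])
  · refine ⟨x, z, hxz, ?_, ?_, by rw [hu, Set.insert_comm]⟩
    · intro h; exact hxy (by rw [h, hu])
    · intro h; exact hyz (by rw [h, hu])
  · refine ⟨x, y, hxy, ?_, ?_, ?_⟩
    · intro h; exact hxz (by rw [h, hu])
    · intro h; exact hyz (by rw [h, hu])
    · rw [hu]; ext w; simp; tauto

lemma eq_three_of {s : Set (Fin 10)} (h3 : s.ncard = 3) {x y z : Fin 10}
    (hx : x ∈ s) (hy : y ∈ s) (hz : z ∈ s) (hxy : x ≠ y) (hxz : x ≠ z) (hyz : y ≠ z) :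
    s = {x, y, z} := by
  have hsub : ({x, y, z} : Set (Fin 10)) ⊆ s := by
    intro w hw; rcases hw with h | h | h
    · exact h ▸ hx
    · exact h ▸ hy
    · exact (Set.mem_singleton_iff.mp h) ▸ hz
  have h3' : ({x, y, z} : Set (Fin 10)).ncard = 3 :=
    Set.ncard_eq_three.mpr ⟨x, y, z, hxy, hxz, hyz, rfl⟩
  exact (Set.eq_of_subset_of_ncard_le hsub (h3 ▸ h3'.symm.le) (Set.toFinite s)).symm

/-- the Petersen adjacency data: neighbor lists. -/
def pnL1 : List (Fin 10) := [1,0,0,0,1,1,2,2,3,3]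
def pnL2 : List (Fin 10) := [2,4,6,8,6,7,4,5,4,5]
def pnL3 : List (Fin 10) := [3,5,7,9,8,9,9,8,7,6]
def pn1 (k : Fin 10) : Fin 10 := pnL1.get (Fin.cast (by rfl) k)
def pn2 (k : Fin 10) : Fin 10 := pnL2.get (Fin.cast (by rfl) k)
def pn3 (k : Fin 10) : Fin 10 := pnL3.get (Fin.cast (by rfl) k)

theorem petersen_unique (A : Fin 10 → Fin 10 → Prop)
    (hsym : ∀ j k, A j k → A k j)
    (hirr : ∀ j, ¬ A j j)
    (hdeg : ∀ k, {j | A j k}.ncard = 3)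
    (hlam : ∀ j k l, A j k → A l j → A l k → False)
    (hmu : ∀ j k, j ≠ k → ¬ A j k → ∃! l, A l j ∧ A l k) :
    ∃ σ : Fin 10 ≃ Fin 10, ∀ j k,
      A (σ j) (σ k) ↔ (j = pn1 k ∨ j = pn2 k ∨ j = pn3 k) := by
  obtain ⟨a, b, c, hab, hac, hbc, hNu⟩ := Set.ncard_eq_three.mp (hdeg 0)
  have nu : ∀ l, A l 0 ↔ (l = a ∨ l = b ∨ l = c) := by
    intro l; have := Set.ext_iff.mp hNu l; simpa using this
  have hAa0 : A a 0 := (nu a).mpr (Or.inl rfl)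
  have hAb0 : A b 0 := (nu b).mpr (Or.inr (Or.inl rfl))
  have hAc0 : A c 0 := (nu c).mpr (Or.inr (Or.inr rfl))
  have ha0 : a ≠ 0 := fun h => hirr 0 (h ▸ hAa0)
  have hb0 : b ≠ 0 := fun h => hirr 0 (h ▸ hAb0)
  have hc0 : c ≠ 0 := fun h => hirr 0 (h ▸ hAc0)
  have hnab : ¬ A a b := fun h => hlam a b 0 h (hsym a 0 hAa0) (hsym b 0 hAb0)
  have hnac : ¬ A a c := fun h => hlam a c 0 h (hsym a 0 hAa0) (hsym c 0 hAc0)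
  have hnbc : ¬ A b c := fun h => hlam b c 0 h (hsym b 0 hAb0) (hsym c 0 hAc0)
  have hnba : ¬ A b a := fun h => hnab (hsym _ _ h)
  have hnca : ¬ A c a := fun h => hnac (hsym _ _ h)
  have hncb : ¬ A c b := fun h => hnbc (hsym _ _ h)
  -- neighbors of a
  obtain ⟨a1, a2, ha12, ha10, ha20, hNa⟩ :=
    three_with_mem (hdeg a) (show (0:Fin 10) ∈ {j | A j a} from hsym a 0 hAa0)
  have na : ∀ l, A l a ↔ (l = 0 ∨ l = a1 ∨ l = a2) := by
    intro l; have := Set.ext_iff.mp hNa l; simpa using this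
  have hAa1a : A a1 a := (na a1).mpr (Or.inr (Or.inl rfl))
  have hAa2a : A a2 a := (na a2).mpr (Or.inr (Or.inr rfl))
  have ha1a : a1 ≠ a := fun h => hirr a (h ▸ hAa1a)
  have ha2a : a2 ≠ a := fun h => hirr a (h ▸ hAa2a)
  have ha1b : a1 ≠ b := fun h => hnba (h ▸ hAa1a)
  have ha2b : a2 ≠ b := fun h => hnba (h ▸ hAa2a)
  have ha1c : a1 ≠ c := fun h => hnca (h ▸ hAa1a)
  have ha2c : a2 ≠ c := fun h => hnca (h ▸ hAa2a)
  have hna10 : ¬ A a1 0 := by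
    intro h
    rcases (nu a1).mp h with h | h | h
    · exact ha1a h
    · exact ha1b h
    · exact ha1c h
  have hna20 : ¬ A a2 0 := by
    intro h
    rcases (nu a2).mp h with h | h | h
    · exact ha2a h
    · exact ha2b h
    · exact ha2c h
  have hn0a1 : ¬ A 0 a1 := fun h => hna10 (hsym _ _ h)
  have hn0a2 : ¬ A 0 a2 := fun h => hna20 (hsym _ _ h)
  -- a1, a2 are not adjacent
  have hna1a2 : ¬ A a1 a2 := fun h => hlam a1 a2 a h (hsym _ _ hAa1a) (hsym _ _ hAa2a)
  have hna2a1 : ¬ A a2 a1 := fun h => hna1a2 (hsym _ _ h)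
  -- a1 (resp a2) is not adjacent to b nor c
  have key_nadj : ∀ v w, A v a → v ≠ 0 → ¬ A v 0 → A w 0 → w ≠ a → ¬ A v w := by
    intro v w hva hv0 hnv0 hw0 hwa h
    obtain ⟨l, _, hluniq⟩ := hmu 0 v (Ne.symm hv0) (fun h' => hnv0 (hsym _ _ h'))
    have h1 := hluniq a ⟨hAa0, hsym _ _ hva⟩
    have h2 := hluniq w ⟨hw0, hsym _ _ h⟩
    exact hwa (h2.trans h1.symm)
  have hna1b : ¬ A a1 b := key_nadj a1 b hAa1a ha10 hna10 hAb0 (Ne.symm hab)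
  have hna2b : ¬ A a2 b := key_nadj a2 b hAa2a ha20 hna20 hAb0 (Ne.symm hab)
  have hna1c : ¬ A a1 c := key_nadj a1 c hAa1a ha10 hna10 hAc0 (Ne.symm hac)
  have hna2c : ¬ A a2 c := key_nadj a2 c hAa2a ha20 hna20 hAc0 (Ne.symm hac)
  -- define b1, b2, c1, c2 as unique common neighbors
  obtain ⟨b1, ⟨hb1a1, hb1b⟩, hb1u⟩ := hmu a1 b ha1b hna1b
  obtain ⟨b2, ⟨hb2a2, hb2b⟩, hb2u⟩ := hmu a2 b ha2b hna2b
  obtain ⟨c1, ⟨hc1a1, hc1c⟩, hc1u⟩ := hmu a1 c ha1c hna1c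
  obtain ⟨c2, ⟨hc2a2, hc2c⟩, hc2u⟩ := hmu a2 c ha2c hna2c
  -- distinctness battery
  have hb10 : b1 ≠ 0 := fun h => hn0a1 (h ▸ hb1a1)
  have hb20 : b2 ≠ 0 := fun h => hn0a2 (h ▸ hb2a2)
  have hc10 : c1 ≠ 0 := fun h => hn0a1 (h ▸ hc1a1)
  have hc20 : c2 ≠ 0 := fun h => hn0a2 (h ▸ hc2a2)
  have hb1a : b1 ≠ a := fun h => hnab (h ▸ hb1b)
  have hb2a : b2 ≠ a := fun h => hnab (h ▸ hb2b)
  have hc1a : c1 ≠ a := fun h => hnac (h ▸ hc1c)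
  have hc2a : c2 ≠ a := fun h => hnac (h ▸ hc2c)
  have hb1b' : b1 ≠ b := fun h => hirr b (h ▸ hb1b)
  have hb2b' : b2 ≠ b := fun h => hirr b (h ▸ hb2b)
  have hc1b : c1 ≠ b := fun h => hnbc (h ▸ hc1c)
  have hc2b : c2 ≠ b := fun h => hnbc (h ▸ hc2c)
  have hb1c : b1 ≠ c := fun h => hncb (h ▸ hb1b)
  have hb2c : b2 ≠ c := fun h => hncb (h ▸ hb2b)
  have hc1c' : c1 ≠ c := fun h => hirr c (h ▸ hc1c)
  have hc2c' : c2 ≠ c := fun h => hirr c (h ▸ hc2c)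
  have hb1A1 : b1 ≠ a1 := fun h => hirr a1 (h ▸ hb1a1)
  have hc1A1 : c1 ≠ a1 := fun h => hirr a1 (h ▸ hc1a1)
  have hb2A2 : b2 ≠ a2 := fun h => hirr a2 (h ▸ hb2a2)
  have hc2A2 : c2 ≠ a2 := fun h => hirr a2 (h ▸ hc2a2)
  have hb2A1 : b2 ≠ a1 := fun h => hna1a2 (h ▸ hb2a2)
  have hc2A1 : c2 ≠ a1 := fun h => hna1a2 (h ▸ hc2a2)
  have hb1A2 : b1 ≠ a2 := fun h => hna2a1 (h ▸ hb1a1)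
  have hc1A2 : c1 ≠ a2 := fun h => hna2a1 (h ▸ hc1a1)
  -- two common neighbors of a1 a2 coincide with a
  have comm12 : ∀ v, A v a1 → A v a2 → v = a := by
    intro v h1 h2
    obtain ⟨l, _, hlu⟩ := hmu a1 a2 ha12 hna1a2
    exact (hlu v ⟨h1, h2⟩).trans (hlu a ⟨hsym _ _ hAa1a, hsym _ _ hAa2a⟩).symm
  -- two common neighbors of b c coincide with 0
  have commbc : ∀ v, A v b → A v c → v = 0 := by
    intro v h1 h2
    obtain ⟨l, _, hlu⟩ := hmu b c hbc hnbc
    exact (hlu v ⟨h1, h2⟩).trans (hlu 0 ⟨hsym _ _ hAb0, hsym _ _ hAc0⟩).symm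
  have hb1b2 : b1 ≠ b2 := fun h => hb1a (comm12 b1 hb1a1 (h ▸ hb2a2))
  have hc1c2 : c1 ≠ c2 := fun h => hc1a (comm12 c1 hc1a1 (h ▸ hc2a2))
  have hb1c2 : b1 ≠ c2 := fun h => hb1a (comm12 b1 hb1a1 (h ▸ hc2a2))
  have hb2c1 : b2 ≠ c1 := fun h => hb2a (comm12 b2 (h ▸ hc1a1) hb2a2)
  have hb1c1 : b1 ≠ c1 := fun h => hb10 (commbc b1 hb1b (h ▸ hc1c))
  have hb2c2 : b2 ≠ c2 := fun h => hb20 (commbc b2 hb2b (h ▸ hc2c))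
  -- neighborhood characterizations
  have nb : ∀ l, A l b ↔ (l = 0 ∨ l = b1 ∨ l = b2) := by
    intro l
    have := eq_three_of (hdeg b) (show _ ∈ {j | A j _} from hsym b 0 hAb0)
      (show _ ∈ {j | A j b} from hb1b) (show _ ∈ {j | A j b} from hb2b)
      (Ne.symm hb10) (Ne.symm hb20) hb1b2
    have := Set.ext_iff.mp this l; simpa using this
  have nc : ∀ l, A l c ↔ (l = 0 ∨ l = c1 ∨ l = c2) := by
    intro l
    have := eq_three_of (hdeg c) (show _ ∈ {j | A j _} from hsym c 0 hAc0)
      (show _ ∈ {j | A j c} from hc1c) (show _ ∈ {j | A j c} from hc2c)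
      (Ne.symm hc10) (Ne.symm hc20) hc1c2
    have := Set.ext_iff.mp this l; simpa using this
  have na1 : ∀ l, A l a1 ↔ (l = a ∨ l = b1 ∨ l = c1) := by
    intro l
    have := eq_three_of (hdeg a1) (show _ ∈ {j | A j _} from hsym a1 a hAa1a)
      (show _ ∈ {j | A j _} from hb1a1) (show _ ∈ {j | A j _} from hc1a1)
      (Ne.symm hb1a) (Ne.symm hc1a) hb1c1
    have := Set.ext_iff.mp this l; simpa using this
  have na2 : ∀ l, A l a2 ↔ (l = a ∨ l = b2 ∨ l = c2) := by
    intro l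
    have := eq_three_of (hdeg a2) (show _ ∈ {j | A j _} from hsym a2 a hAa2a)
      (show _ ∈ {j | A j _} from hb2a2) (show _ ∈ {j | A j _} from hc2a2)
      (Ne.symm hb2a) (Ne.symm hc2a) hb2c2
    have := Set.ext_iff.mp this l; simpa using this
  -- third neighbor of b1 is c2, of b2 is c1
  have hnb1c : ¬ A b1 c := fun h => hb10 (commbc b1 hb1b h)
  have hnb2c : ¬ A b2 c := fun h => hb20 (commbc b2 hb2b h)
  have hn0b1 : ¬ A 0 b1 := by
    intro h
    have := hsym _ _ h
    rcases (nu b1).mp this with h' | h' | h'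
    · exact hb1a h'
    · exact hb1b' h'
    · exact hb1c h'
  have hn0b2 : ¬ A 0 b2 := by
    intro h
    have := hsym _ _ h
    rcases (nu b2).mp this with h' | h' | h'
    · exact hb2a h'
    · exact hb2b' h'
    · exact hb2c h'
  have hAc2b1 : A c2 b1 := by
    obtain ⟨l, ⟨hl1, hl2⟩, _⟩ := hmu b1 c hb1c hnb1c
    rcases (nc l).mp hl2 with h | h | h
    · exact absurd (h ▸ hl1) hn0b1
    · exact absurd (hsym _ _ (h ▸ hl1)) (fun h' => hlam b1 c1 a1 h' (hsym _ _ hb1a1) (hsym _ _ hc1a1))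
    · exact h ▸ hl1
  have hAc1b2 : A c1 b2 := by
    obtain ⟨l, ⟨hl1, hl2⟩, _⟩ := hmu b2 c hb2c hnb2c
    rcases (nc l).mp hl2 with h | h | h
    · exact absurd (h ▸ hl1) hn0b2
    · exact h ▸ hl1
    · exact absurd (hsym _ _ (h ▸ hl1)) (fun h' => hlam b2 c2 a2 h' (hsym _ _ hb2a2) (hsym _ _ hc2a2))
  have nb1 : ∀ l, A l b1 ↔ (l = b ∨ l = a1 ∨ l = c2) := by
    intro l
    have := eq_three_of (hdeg b1) (show _ ∈ {j | A j _} from hsym b1 b hb1b)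
      (show _ ∈ {j | A j _} from hsym b1 a1 hb1a1) (show _ ∈ {j | A j _} from hAc2b1)
      (fun h => ha1b h.symm) (Ne.symm hc2b) (fun h => hc2A1 h.symm)
    have := Set.ext_iff.mp this l; simpa using this
  have nb2 : ∀ l, A l b2 ↔ (l = b ∨ l = a2 ∨ l = c1) := by
    intro l
    have := eq_three_of (hdeg b2) (show _ ∈ {j | A j _} from hsym b2 b hb2b)
      (show _ ∈ {j | A j _} from hsym b2 a2 hb2a2) (show _ ∈ {j | A j _} from hAc1b2)
      (fun h => ha2b h.symm) (Ne.symm hc1b) (fun h => hc1A2 h.symm)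
    have := Set.ext_iff.mp this l; simpa using this
  have nc1 : ∀ l, A l c1 ↔ (l = c ∨ l = a1 ∨ l = b2) := by
    intro l
    have := eq_three_of (hdeg c1) (show _ ∈ {j | A j _} from hsym c1 c hc1c)
      (show _ ∈ {j | A j _} from hsym c1 a1 hc1a1) (show _ ∈ {j | A j _} from hsym c1 b2 hAc1b2)
      (fun h => ha1c h.symm) (fun h => hb2c h.symm) (fun h => hb2A1 h.symm)
    have := Set.ext_iff.mp this l; simpa using this
  have nc2 : ∀ l, A l c2 ↔ (l = c ∨ l = a2 ∨ l = b1) := by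
    intro l
    have := eq_three_of (hdeg c2) (show _ ∈ {j | A j _} from hsym c2 c hc2c)
      (show _ ∈ {j | A j _} from hsym c2 a2 hc2a2) (show _ ∈ {j | A j _} from hsym c2 b1 hAc2b1)
      (fun h => ha2c h.symm) (fun h => hb1c h.symm) (fun h => hb1A2 h.symm)
    have := Set.ext_iff.mp this l; simpa using this
  -- assemble the bijection
  set L : List (Fin 10) := [0, a, b, c, a1, a2, b1, b2, c1, c2] with hL
  have hnodup : L.Nodup := by
    simp only [hL, List.nodup_cons, List.mem_cons, List.not_mem_nil, or_false,
      List.nodup_nil, and_true, not_or]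
    refine ⟨⟨Ne.symm ha0, Ne.symm hb0, Ne.symm hc0, Ne.symm ha10, Ne.symm ha20,
        Ne.symm hb10, Ne.symm hb20, Ne.symm hc10, Ne.symm hc20⟩,
      ⟨hab, hac, Ne.symm ha1a, Ne.symm ha2a, Ne.symm hb1a, Ne.symm hb2a,
        Ne.symm hc1a, Ne.symm hc2a⟩,
      ⟨hbc, Ne.symm ha1b, Ne.symm ha2b, Ne.symm hb1b', Ne.symm hb2b',
        Ne.symm hc1b, Ne.symm hc2b⟩,
      ⟨Ne.symm ha1c, Ne.symm ha2c, Ne.symm hb1c, Ne.symm hb2c, Ne.symm hc1c',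
        Ne.symm hc2c'⟩,
      ⟨ha12, Ne.symm hb1A1, Ne.symm hb2A1, Ne.symm hc1A1, Ne.symm hc2A1⟩,
      ⟨Ne.symm hb1A2, Ne.symm hb2A2, Ne.symm hc1A2, Ne.symm hc2A2⟩,
      ⟨hb1b2, hb1c1, hb1c2⟩, ⟨hb2c1, hb2c2⟩, ⟨hc1c2, not_false⟩⟩
  have hglen : L.length = 10 := rfl
  set g : Fin 10 → Fin 10 := fun j => L.get (Fin.cast hglen.symm j) with hg
  have hginj : Function.Injective g := by
    intro i j h
    have := List.nodup_iff_injective_get.mp hnodup h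
    exact Fin.cast_injective _ this
  have hgbij : Function.Bijective g := (Finite.injective_iff_bijective).mp hginj
  refine ⟨Equiv.ofBijective g hgbij, ?_⟩
  intro j k
  show A (g j) (g k) ↔ _
  have hch : ∀ l, A l (g k) ↔ (l = g (pn1 k) ∨ l = g (pn2 k) ∨ l = g (pn3 k)) := by
    fin_cases k
    · exact nu
    · exact na
    · exact nb
    · exact nc
    · exact na1
    · exact na2
    · exact nb1
    · exact nb2
    · exact nc1
    · exact nc2
  rw [hch (g j), hginj.eq_iff, hginj.eq_iff, hginj.eq_iff]


/-- For any two cliques `D`, `D'` of order 10 in the graph on `Y1`, there is an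
inner-product-preserving bijection from `C1 ∪ D` onto `C1 ∪ D'`, where
`C1 = {x 0, …, x 10}`; i.e. the Gram matrices are permutationally equivalent. -/
theorem cliques10_gram_equivalent (x : Fin 11 → EuclideanSpace ℝ (Fin 10))
    (hx : IsRegularSimplex x)
    (D D' : Set (EuclideanSpace ℝ (Fin 10)))
    (hD : IsClique10 x D) (hD' : IsClique10 x D') :
    ∃ f : (Set.range x ∪ D : Set (EuclideanSpace ℝ (Fin 10))) ≃
          (Set.range x ∪ D' : Set (EuclideanSpace ℝ (Fin 10))),
      ∀ u v : (Set.range x ∪ D : Set (EuclideanSpace ℝ (Fin 10))),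
        ⟪(f u : EuclideanSpace ℝ (Fin 10)), (f v : EuclideanSpace ℝ (Fin 10))⟫ =
        ⟪(u : EuclideanSpace ℝ (Fin 10)), (v : EuclideanSpace ℝ (Fin 10))⟫ := by
  obtain ⟨yd, A, hydD, hydinj, hydsurj, hydnorm, hydcl, hyd0, hydval,
    hsym, hirr, hdeg, hlam, hmu⟩ := clique_structure hx hD
  obtain ⟨yd', A', hydD', hydinj', hydsurj', hydnorm', hydcl', hyd0', hydval',
    hsym', hirr', hdeg', hlam', hmu'⟩ := clique_structure hx hD'
  obtain ⟨σ, hσ⟩ := petersen_unique A hsym hirr hdeg hlam hmu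
  obtain ⟨σ', hσ'⟩ := petersen_unique A' hsym' hirr' hdeg' hlam' hmu'
  set ρ : Fin 10 ≃ Fin 10 := σ.symm.trans σ' with hρ
  have hAiso : ∀ j k, A j k ↔ A' (ρ j) (ρ k) := by
    intro j k
    have h1 := hσ (σ.symm j) (σ.symm k)
    have h2 := hσ' (σ.symm j) (σ.symm k)
    simp only [Equiv.apply_symm_apply] at h1
    have : ρ j = σ' (σ.symm j) := rfl
    rw [this, show ρ k = σ' (σ.symm k) from rfl]
    rw [h2, ← h1]
  -- the permutation on Fin 11 fixing 0
  set τ : Fin 11 ≃ Fin 11 :=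
    (finSuccEquiv 10).trans ((Equiv.optionCongr ρ).trans (finSuccEquiv 10).symm) with hτ
  have hτ0 : τ 0 = 0 := by
    simp [hτ]
  have hτs : ∀ l : Fin 10, τ l.succ = (ρ l).succ := by
    intro l
    simp [hτ]
  have hxself : ∀ i, ⟪x i, x i⟫ = 1 := by
    intro i
    rw [real_inner_self_eq_norm_sq, hx.1 i]; norm_num
  have hxinj : Function.Injective x := by
    intro i j h
    by_contra hne
    have h1 := hx.2 i j hne
    rw [h, hxself j] at h1
    norm_num at h1
  have hval_mem : ∀ i (j : Fin 10),
      ⟪x i, yd j⟫ = α1 ∨ ⟪x i, yd j⟫ = α2 ∨ ⟪x i, yd j⟫ = α3 := by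
    intro i j
    induction i using Fin.cases with
    | zero => exact Or.inr (Or.inl (hyd0 j))
    | succ l =>
      rw [hydval l j]
      by_cases h1 : l = j
      · rw [if_pos h1]; tauto
      · rw [if_neg h1]
        by_cases h2 : A l j
        · rw [if_pos h2]; tauto
        · rw [if_neg h2]; tauto
  have hval_mem' : ∀ i (j : Fin 10),
      ⟪x i, yd' j⟫ = α1 ∨ ⟪x i, yd' j⟫ = α2 ∨ ⟪x i, yd' j⟫ = α3 := by
    intro i j
    induction i using Fin.cases with
    | zero => exact Or.inr (Or.inl (hyd0' j))
    | succ l =>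
      rw [hydval' l j]
      by_cases h1 : l = j
      · rw [if_pos h1]; tauto
      · rw [if_neg h1]
        by_cases h2 : A' l j
        · rw [if_pos h2]; tauto
        · rw [if_neg h2]; tauto
  have hdisj : ∀ i (j : Fin 10), x i ≠ yd j := by
    intro i j h
    have h1 : ⟪x i, yd j⟫ = 1 := by rw [← h]; exact hxself i
    rcases hval_mem i j with h2 | h2 | h2 <;> rw [h1] at h2 <;> norm_num [α1, α2, α3] at h2
  have hdisj' : ∀ i (j : Fin 10), x i ≠ yd' j := by
    intro i j h
    have h1 : ⟪x i, yd' j⟫ = 1 := by rw [← h]; exact hxself i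
    rcases hval_mem' i j with h2 | h2 | h2 <;> rw [h1] at h2 <;> norm_num [α1, α2, α3] at h2
  -- the two parametrizations
  have hrange : Set.range (Sum.elim x yd) = Set.range x ∪ D := by
    ext z
    constructor
    · rintro ⟨s, rfl⟩
      cases s with
      | inl i => exact Or.inl ⟨i, rfl⟩
      | inr j => exact Or.inr (hydD j)
    · rintro (⟨i, rfl⟩ | hz)
      · exact ⟨Sum.inl i, rfl⟩
      · obtain ⟨j, rfl⟩ := hydsurj z hz
        exact ⟨Sum.inr j, rfl⟩
  have hrange' : Set.range (Sum.elim x yd') = Set.range x ∪ D' := by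
    ext z
    constructor
    · rintro ⟨s, rfl⟩
      cases s with
      | inl i => exact Or.inl ⟨i, rfl⟩
      | inr j => exact Or.inr (hydD' j)
    · rintro (⟨i, rfl⟩ | hz)
      · exact ⟨Sum.inl i, rfl⟩
      · obtain ⟨j, rfl⟩ := hydsurj' z hz
        exact ⟨Sum.inr j, rfl⟩
  set F : Fin 11 ⊕ Fin 10 → (Set.range x ∪ D : Set (EuclideanSpace ℝ (Fin 10))) :=
    fun s => ⟨Sum.elim x yd s, by rw [← hrange]; exact ⟨s, rfl⟩⟩ with hF
  set F' : Fin 11 ⊕ Fin 10 → (Set.range x ∪ D' : Set (EuclideanSpace ℝ (Fin 10))) :=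
    fun s => ⟨Sum.elim x yd' s, by rw [← hrange']; exact ⟨s, rfl⟩⟩ with hF'
  have hFbij : Function.Bijective F := by
    constructor
    · intro s t h
      have h' : Sum.elim x yd s = Sum.elim x yd t := congrArg Subtype.val h
      cases s with
      | inl i =>
        cases t with
        | inl i' => exact congrArg Sum.inl (hxinj h')
        | inr j => exact absurd h' (hdisj i j)
      | inr j =>
        cases t with
        | inl i => exact absurd h'.symm (hdisj i j)
        | inr j' => exact congrArg Sum.inr (hydinj h')
    · intro z
      have hz : (z : EuclideanSpace ℝ (Fin 10)) ∈ Set.range (Sum.elim x yd) := by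
        rw [hrange]; exact z.2
      obtain ⟨s, hs⟩ := hz
      exact ⟨s, Subtype.ext hs⟩
  have hFbij' : Function.Bijective F' := by
    constructor
    · intro s t h
      have h' : Sum.elim x yd' s = Sum.elim x yd' t := congrArg Subtype.val h
      cases s with
      | inl i =>
        cases t with
        | inl i' => exact congrArg Sum.inl (hxinj h')
        | inr j => exact absurd h' (hdisj' i j)
      | inr j =>
        cases t with
        | inl i => exact absurd h'.symm (hdisj' i j)
        | inr j' => exact congrArg Sum.inr (hydinj' h')
    · intro z
      have hz : (z : EuclideanSpace ℝ (Fin 10)) ∈ Set.range (Sum.elim x yd') := by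
        rw [hrange']; exact z.2
      obtain ⟨s, hs⟩ := hz
      exact ⟨s, Subtype.ext hs⟩
  set e : (Fin 11 ⊕ Fin 10) ≃ (Set.range x ∪ D : Set (EuclideanSpace ℝ (Fin 10))) :=
    Equiv.ofBijective F hFbij with he
  set e' : (Fin 11 ⊕ Fin 10) ≃ (Set.range x ∪ D' : Set (EuclideanSpace ℝ (Fin 10))) :=
    Equiv.ofBijective F' hFbij' with he'
  refine ⟨e.symm.trans ((Equiv.sumCongr τ ρ).trans e'), ?_⟩
  intro u v
  obtain ⟨s, rfl⟩ := e.surjective u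
  obtain ⟨t, rfl⟩ := e.surjective v
  simp only [Equiv.trans_apply, Equiv.symm_apply_apply]
  have hcoe : ∀ s, ((e s : (Set.range x ∪ D : Set (EuclideanSpace ℝ (Fin 10)))) :
      EuclideanSpace ℝ (Fin 10)) = Sum.elim x yd s := fun s => rfl
  have hcoe' : ∀ s, ((e' s : (Set.range x ∪ D' : Set (EuclideanSpace ℝ (Fin 10)))) :
      EuclideanSpace ℝ (Fin 10)) = Sum.elim x yd' s := fun s => rfl
  rw [hcoe, hcoe, hcoe', hcoe']
  have cross : ∀ (i : Fin 11) (j : Fin 10), ⟪x (τ i), yd' (ρ j)⟫ = ⟪x i, yd j⟫ := by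
    intro i j
    induction i using Fin.cases with
    | zero => rw [hτ0, hyd0' (ρ j), hyd0 j]
    | succ l =>
      rw [hτs l, hydval' (ρ l) (ρ j), hydval l j]
      by_cases hlj : l = j
      · rw [if_pos hlj, if_pos (by rw [hlj])]
      · rw [if_neg hlj, if_neg (fun h => hlj (ρ.injective h))]
        by_cases hA : A l j
        · rw [if_pos ((hAiso l j).mp hA), if_pos hA]
        · rw [if_neg (fun h => hA ((hAiso l j).mpr h)), if_neg hA]
  cases s with
  | inl i =>
    cases t with
    | inl i' =>
      simp only [Equiv.sumCongr_apply, Sum.map_inl, Sum.elim_inl]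
      by_cases h : i = i'
      · subst h; rw [hxself, hxself]
      · rw [hx.2 _ _ (fun hh => h (τ.injective hh)), hx.2 i i' h]
    | inr j =>
      simp only [Equiv.sumCongr_apply, Sum.map_inl, Sum.map_inr, Sum.elim_inl, Sum.elim_inr]
      exact cross i j
  | inr j =>
    cases t with
    | inl i =>
      simp only [Equiv.sumCongr_apply, Sum.map_inl, Sum.map_inr, Sum.elim_inl, Sum.elim_inr]
      rw [real_inner_comm (x (τ i)) (yd' (ρ j)), real_inner_comm (x i) (yd j)]
      exact cross i j
    | inr k =>
      simp only [Equiv.sumCongr_apply, Sum.map_inr, Sum.elim_inr]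
      by_cases h : j = k
      · subst h
        have e1 : ⟪yd' (ρ j), yd' (ρ j)⟫ = 1 := by
          rw [real_inner_self_eq_norm_sq, hydnorm' (ρ j)]; norm_num
        have e2 : ⟪yd j, yd j⟫ = 1 := by
          rw [real_inner_self_eq_norm_sq, hydnorm j]; norm_num
        rw [e1, e2]
      · rw [hydcl' _ _ (fun hh => h (ρ.injective hh)), hydcl j k h]
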